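/- For all real t and real n ≥ 1 with |t| ≤ n: e^t(1 − t²/n) ≤ (1 + t/n)^n ≤ e^t. -/

import Mathlib

/-- For all real `t` and real `n ≥ 1` with `|t| ≤ n`:
`e^t(1 − t²/n) ≤ (1 + t/n)^n ≤ e^t`, where `(1 + t/n)^n` is the real power. -/
theorem stmt_9 (t n : ℝ) (hn : 1 ≤ n) (ht : |t| ≤ n) :
    Real.exp t * (1 - t ^ 2 / n) ≤ (1 + t / n) ^ n ∧
      (1 + t / n) ^ n ≤ Real.exp t := by
  have hn0 : (0:ℝ) < n := lt_of_lt_of_le one_pos hn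
  set x := t / n with hxdef
  have hx : |x| ≤ 1 := by
    rw [hxdef, abs_div, abs_of_pos hn0, div_le_one hn0]; exact ht
  have hx1 : -1 ≤ x := neg_le_of_abs_le hx
  have hx2 : x ≤ 1 := le_of_abs_le hx
  have h1x : (0:ℝ) ≤ 1 + x := by linarith
  have hexp : Real.exp t = Real.exp x ^ n := by
    rw [← Real.exp_mul, hxdef, div_mul_cancel₀ _ hn0.ne']
  have hx2n : 1 - x ^ 2 = (1 - x) * (1 + x) := by ring
  have hsq : t ^ 2 / n = n * x ^ 2 := by
    rw [hxdef]; field_simp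
  constructor
  · -- lower bound
    have hbern : 1 - t ^ 2 / n ≤ (1 - x ^ 2) ^ n := by
      have := one_add_mul_self_le_rpow_one_add (s := -(x ^ 2))
        (by nlinarith [sq_abs x, abs_nonneg x]) hn
      calc 1 - t ^ 2 / n = 1 + n * -(x ^ 2) := by rw [hsq]; ring
        _ ≤ (1 + -(x ^ 2)) ^ n := this
        _ = (1 - x ^ 2) ^ n := by ring_nf
    have hnn : (0:ℝ) ≤ 1 - x ^ 2 := by nlinarith [sq_abs x, abs_nonneg x]
    have hbase : Real.exp x * (1 - x ^ 2) ≤ 1 + x := by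
      have h2 : 1 - x ≤ Real.exp (-x) := by
        have := Real.add_one_le_exp (-x); linarith
      calc Real.exp x * (1 - x ^ 2) = (Real.exp x * (1 - x)) * (1 + x) := by ring
        _ ≤ (Real.exp x * Real.exp (-x)) * (1 + x) := by
            apply mul_le_mul_of_nonneg_right _ h1x
            exact mul_le_mul_of_nonneg_left h2 (Real.exp_pos x).le
        _ = 1 + x := by rw [← Real.exp_add]; simp
    calc Real.exp t * (1 - t ^ 2 / n) ≤ Real.exp t * (1 - x ^ 2) ^ n :=
          mul_le_mul_of_nonneg_left hbern (Real.exp_pos t).le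
      _ = (Real.exp x * (1 - x ^ 2)) ^ n := by
          rw [hexp, ← Real.mul_rpow (Real.exp_pos x).le hnn]
      _ ≤ (1 + x) ^ n :=
          Real.rpow_le_rpow (by positivity) hbase hn0.le
  · -- upper bound
    have h1 : 1 + x ≤ Real.exp x := by
      have := Real.add_one_le_exp x; linarith
    rw [hexp]
    exact Real.rpow_le_rpow h1x h1 hn0.le
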